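/- Let Q ⊂ ℝ^n be a full-dimensional simplicial reflexive polytope with constant weight function a ≡ 1, satisfying Condition (1'): for every u ∈ V(Q) and v ∈ V(Q*), 1+⟨v,u⟩ equals either 0 or ε_Q. If there exists a facet of Q whose n vertices do not form a ℤ-basis of ℤ^n, then ι_Q < ε_Q. Equivalently: if Condition (1') holds and ι_Q = ε_Q, then the vertex set of every facet of Q is a ℤ-basis of ℤ^n (i.e. the associated toric Fano variety is locally factorial). -/

import Mathlib

open Matrix

/-- The polar dual `Q* = {v | ⟨v,u⟩ ≥ -1 for all u ∈ Q}`. -/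
def polarDual {n : ℕ} (Q : Set (Fin n → ℝ)) : Set (Fin n → ℝ) :=
  {v | ∀ u ∈ Q, -1 ≤ v ⬝ᵥ u}

/-- A vector of `ℝ^n` is integral if all its coordinates are integers. -/
def isIntegral {n : ℕ} (u : Fin n → ℝ) : Prop := ∀ i, ∃ z : ℤ, u i = (z : ℝ)

/-- A vector of `(ℝ^n)*` is a primitive element of the dual lattice `(ℤ^n)*` if its
coordinates are integers whose gcd is `1`. -/
def isPrimitive {n : ℕ} (χ : Fin n → ℝ) : Prop :=
  ∃ c : Fin n → ℤ, (∀ i, χ i = (c i : ℝ)) ∧ Finset.univ.gcd c = 1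

/-- The set of numbers `a(u)(1 + ⟨v,u⟩)` for `u ∈ V(Q)`, `v ∈ V(Q*)`, `u ∉ F_v`;
`ε_Q` is its minimum. -/
def epsSet {n : ℕ} (VQ VQd : Finset (Fin n → ℝ)) (a : (Fin n → ℝ) → ℝ) : Set ℝ :=
  {x | ∃ u ∈ VQ, ∃ v ∈ VQd, v ⬝ᵥ u ≠ -1 ∧ x = a u * (1 + v ⬝ᵥ u)}

/-- The set of numbers `(1 + ⟨v,u⟩)/⟨χ_μ,u⟩` over all `(n-2)`-dimensional faces `μ` of the
simplicial reflexive polytope `Q` and both orderings `(F_v, F_{v'})` of the two facets of `Q`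
containing `μ`; here `u` is the unique vertex of `F_{v'}` not lying in `μ` (encoded as: `u` is
a vertex of `F_{v'}` not in `F_v`, and all other vertices of `F_{v'}` lie in `F_v`), and
`χ_μ` is the primitive element of `(ℤ^n)*` vanishing on the linear span of `μ` (i.e. on all
vertices of `F_{v'}` other than `u`) with `⟨χ_μ,u⟩ > 0`.  `ι_Q` is its minimum. -/
def iotaSet {n : ℕ} (VQ VQd : Finset (Fin n → ℝ)) : Set ℝ :=
  {x | ∃ v ∈ VQd, ∃ v' ∈ VQd, v ≠ v' ∧ ∃ u ∈ VQ,
    v' ⬝ᵥ u = -1 ∧ v ⬝ᵥ u ≠ -1 ∧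
    (∀ w ∈ VQ, v' ⬝ᵥ w = -1 → w ≠ u → v ⬝ᵥ w = -1) ∧
    ∃ χ : Fin n → ℝ, isPrimitive χ ∧
      (∀ w ∈ VQ, v' ⬝ᵥ w = -1 → w ≠ u → χ ⬝ᵥ w = 0) ∧
      0 < χ ⬝ᵥ u ∧ x = (1 + v ⬝ᵥ u) / (χ ⬝ᵥ u)}

section Auxiliary

lemma dot_isLinearMap {n : ℕ} (w : Fin n → ℝ) :
    IsLinearMap ℝ (fun u : Fin n → ℝ => w ⬝ᵥ u) :=
  ⟨fun a b => dotProduct_add w a b, fun c a => by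
    simp [dotProduct_smul, smul_eq_mul]⟩

lemma mem_polarDual_hull {n : ℕ} {S : Finset (Fin n → ℝ)} {w : Fin n → ℝ} :
    w ∈ polarDual (convexHull ℝ (S : Set (Fin n → ℝ))) ↔ ∀ u ∈ S, -1 ≤ w ⬝ᵥ u := by
  constructor
  · exact fun h u hu => h u (subset_convexHull ℝ _ hu)
  · intro h u hu
    have hconv : Convex ℝ {u : Fin n → ℝ | -1 ≤ w ⬝ᵥ u} :=
      convex_halfSpace_ge (dot_isLinearMap w) (-1)
    exact convexHull_min h hconv hu

lemma polarDual_closed {n : ℕ} (Q : Set (Fin n → ℝ)) : IsClosed (polarDual Q) := by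
  have : polarDual Q = ⋂ u ∈ Q, {w : Fin n → ℝ | -1 ≤ w ⬝ᵥ u} := by
    ext w; simp [polarDual, Set.mem_iInter]
  rw [this]
  refine isClosed_biInter fun u _ => isClosed_le continuous_const ?_
  have : (fun w : Fin n → ℝ => w ⬝ᵥ u) = fun w => ∑ k, w k * u k := by
    funext w; rfl
  rw [this]
  exact continuous_finset_sum _ fun k _ => (continuous_apply k).mul continuous_const

lemma exists_move {n : ℕ} {VQ : Finset (Fin n → ℝ)} (hne : VQ.Nonempty) {v ξ : Fin n → ℝ}
    (hv : ∀ u ∈ VQ, -1 ≤ v ⬝ᵥ u)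
    (hξ : ∀ u ∈ VQ, v ⬝ᵥ u = -1 → 0 ≤ ξ ⬝ᵥ u) :
    ∃ t : ℝ, 0 < t ∧ ∀ t' : ℝ, 0 < t' → t' ≤ t → ∀ u ∈ VQ, -1 ≤ (v + t' • ξ) ⬝ᵥ u := by
  classical
  set g : (Fin n → ℝ) → ℝ := fun u =>
    if ξ ⬝ᵥ u < 0 ∧ v ⬝ᵥ u ≠ -1 then (1 + v ⬝ᵥ u) / (-(ξ ⬝ᵥ u)) else 1 with hg
  refine ⟨VQ.inf' hne g, ?_, ?_⟩
  · rw [Finset.lt_inf'_iff]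
    intro u hu
    simp only [hg]
    split_ifs with h
    · apply div_pos
      · have : -1 < v ⬝ᵥ u := lt_of_le_of_ne (hv u hu) (Ne.symm h.2)
        linarith
      · linarith [h.1]
    · norm_num
  · intro t' ht' ht'le u hu
    have hle : t' ≤ g u := le_trans ht'le (Finset.inf'_le g hu)
    have hdot : (v + t' • ξ) ⬝ᵥ u = v ⬝ᵥ u + t' * (ξ ⬝ᵥ u) := by
      rw [add_dotProduct, smul_dotProduct]; rfl
    rw [hdot]
    by_cases hvu : v ⬝ᵥ u = -1
    · have := hξ u hu hvu
      nlinarith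
    · have hvgt : -1 < v ⬝ᵥ u := lt_of_le_of_ne (hv u hu) (Ne.symm hvu)
      by_cases hξu : ξ ⬝ᵥ u < 0
      · have hgu : g u = (1 + v ⬝ᵥ u) / (-(ξ ⬝ᵥ u)) := by
          simp [hg, hξu, hvu]
        rw [hgu] at hle
        rw [le_div_iff₀ (by linarith)] at hle
        nlinarith
      · push_neg at hξu
        nlinarith

/-- Construct a primitive integral functional vanishing on the rows `u_ j`, `j ≠ i`,
positive on `u_ i`. -/
lemma exists_primitive_perp {n : ℕ} (u_ : Fin n → (Fin n → ℝ)) (z : Fin n → Fin n → ℤ)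
    (hz : ∀ j k, u_ j k = ((z j k : ℤ) : ℝ))
    (hdet : (Matrix.of (fun j k => u_ j k)).det ≠ 0) (i : Fin n) :
    ∃ ξ : Fin n → ℝ, isPrimitive ξ ∧ (∀ j, j ≠ i → ξ ⬝ᵥ u_ j = 0) ∧ 0 < ξ ⬝ᵥ u_ i := by
  classical
  set Z : Matrix (Fin n) (Fin n) ℤ := Matrix.of (fun j k => z j k) with hZ
  have hmap : (Matrix.of (fun j k => u_ j k)) = Z.map (Int.cast : ℤ → ℝ) := by
    ext j k; simp [hZ, hz]
  have hZdet : Z.det ≠ 0 := by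
    intro h
    apply hdet
    rw [hmap]
    have : (Z.map (Int.cast : ℤ → ℝ)).det = ((Z.det : ℤ) : ℝ) := by
      have h2 := (Int.castRingHom ℝ).map_det Z
      simp only [RingHom.mapMatrix_apply, Int.coe_castRingHom] at h2
      exact h2.symm
    rw [this, h]
    simp
  set σ : ℤ := if 0 < Z.det then 1 else -1 with hσ
  have hσdet : 0 < σ * Z.det := by
    rcases lt_trichotomy Z.det 0 with h | h | h
    · rw [hσ, if_neg (by omega)]; nlinarith
    · exact absurd h hZdet
    · rw [hσ, if_pos h]; nlinarith
  set c₀ : Fin n → ℤ := fun k => σ * Z.adjugate k i with hc₀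
  have hkey : ∀ j, (∑ k, Z j k * c₀ k) = if j = i then σ * Z.det else 0 := by
    intro j
    have h1 : (∑ k, Z j k * c₀ k) = σ * ∑ k, Z j k * Z.adjugate k i := by
      rw [Finset.mul_sum]; congr 1; funext k; ring
    rw [h1]
    have h2 : (∑ k, Z j k * Z.adjugate k i) = (Z * Z.adjugate) j i := rfl
    rw [h2, Matrix.mul_adjugate]
    by_cases h : j = i <;> simp [h, Matrix.one_apply, mul_comm]
  have hdotr : ∀ j, u_ j ⬝ᵥ (fun k => ((c₀ k : ℤ) : ℝ)) =
      ((if j = i then σ * Z.det else 0 : ℤ) : ℝ) := by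
    intro j
    rw [← hkey j]
    push_cast
    simp [dotProduct, hz, hZ]
  have hc₀i : ∃ k, c₀ k ≠ 0 := by
    by_contra h
    push_neg at h
    have hd := hdotr i
    simp only [if_pos rfl] at hd
    have hz0 : u_ i ⬝ᵥ (fun k => ((c₀ k : ℤ) : ℝ)) = 0 := by
      have hfun : (fun k => ((c₀ k : ℤ) : ℝ)) = 0 := by funext k; simp [h k]
      rw [hfun, dotProduct_zero]
    rw [hz0] at hd
    have : σ * Z.det = 0 := by exact_mod_cast hd.symm
    omega
  obtain ⟨k₀, hk₀⟩ := hc₀i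
  set g : ℤ := Finset.univ.gcd c₀ with hgdef
  have hgdvd : ∀ k, g ∣ c₀ k := fun k => Finset.gcd_dvd (Finset.mem_univ k)
  have hgne : g ≠ 0 := fun h => hk₀ (Finset.gcd_eq_zero_iff.1 h k₀ (Finset.mem_univ k₀))
  have hgnonneg : 0 ≤ g := Int.nonneg_of_normalize_eq_self Finset.normalize_gcd
  have hgpos : 0 < g := lt_of_le_of_ne hgnonneg (Ne.symm hgne)
  set c : Fin n → ℤ := fun k => c₀ k / g with hc
  have hceq : ∀ k, c₀ k = g * c k := fun k => (Int.mul_ediv_cancel' (hgdvd k)).symm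
  have hgcd1 : Finset.univ.gcd c = 1 := by
    have := Finset.gcd_div_eq_one (f := c₀) (Finset.mem_univ k₀) hk₀
    simpa [hc, hgdef] using this
  refine ⟨fun k => ((c k : ℤ) : ℝ), ⟨c, fun k => rfl, hgcd1⟩, ?_, ?_⟩
  · intro j hj
    have h1 := hdotr j
    rw [if_neg hj] at h1
    have h2 : u_ j ⬝ᵥ (fun k => ((c₀ k : ℤ) : ℝ)) =
        (g : ℝ) * (u_ j ⬝ᵥ fun k => ((c k : ℤ) : ℝ)) := by
      simp only [dotProduct, Finset.mul_sum]
      congr 1; funext k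
      rw [hceq k]; push_cast; ring
    rw [h2] at h1
    have hg : (g : ℝ) ≠ 0 := Int.cast_ne_zero.2 hgne
    have h3 := mul_eq_zero.1
      (by rw [h1]; norm_num : (g : ℝ) * (u_ j ⬝ᵥ fun k => ((c k : ℤ) : ℝ)) = 0)
    rcases h3 with h | h
    · exact absurd h hg
    · rw [dotProduct_comm]
      exact h
  · have h1 := hdotr i
    rw [if_pos rfl] at h1
    have h2 : u_ i ⬝ᵥ (fun k => ((c₀ k : ℤ) : ℝ)) =
        (g : ℝ) * (u_ i ⬝ᵥ fun k => ((c k : ℤ) : ℝ)) := by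
      simp only [dotProduct, Finset.mul_sum]
      congr 1; funext k
      rw [hceq k]; push_cast; ring
    rw [h2] at h1
    have hgr : (0:ℝ) < (g:ℝ) := by exact_mod_cast hgpos
    have hD : (0:ℝ) < ((σ * Z.det : ℤ) : ℝ) := by exact_mod_cast hσdet
    rw [dotProduct_comm]
    nlinarith [h1]

end Auxiliary

set_option maxHeartbeats 1600000

/-- Let `Q ⊂ ℝ^n` be a full-dimensional simplicial reflexive polytope with
constant weight `a ≡ 1`, satisfying Condition (1'): `1 + ⟨v,u⟩ ∈ {0, ε_Q}` for all
`u ∈ V(Q)`, `v ∈ V(Q*)`.  If some facet of `Q` has vertex set which is not a `ℤ`-basis of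
`ℤ^n` (i.e. whose `ℤ`-span is not the full lattice `ℤ^n ⊂ ℝ^n`), then `ι_Q < ε_Q`. -/
theorem condition1'_not_locally_factorial_implies_iota_lt_eps {n : ℕ} (hn : 1 ≤ n)
    (VQ VQd : Finset (Fin n → ℝ))
    -- `VQ` is the vertex set of the polytope `Q = conv(VQ)`
    (hVQ : (VQ : Set (Fin n → ℝ)) =
      Set.extremePoints ℝ (convexHull ℝ (VQ : Set (Fin n → ℝ))))
    -- `0` lies in the interior of `Q` (in particular `Q` is full-dimensional)
    (h0 : (0 : Fin n → ℝ) ∈ interior (convexHull ℝ (VQ : Set (Fin n → ℝ))))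
    -- `VQd` is the vertex set of the polar dual `Q*`
    (hVQd : (VQd : Set (Fin n → ℝ)) =
      Set.extremePoints ℝ (polarDual (convexHull ℝ (VQ : Set (Fin n → ℝ)))))
    -- `Q` is simplicial: every facet has exactly `n` vertices
    (hsimp : ∀ v ∈ VQd, (VQ.filter fun u => v ⬝ᵥ u = -1).card = n)
    -- `Q` is reflexive: vertices of `Q` and of `Q*` are lattice points
    (hrefl : ∀ u ∈ VQ, isIntegral u) (hrefld : ∀ v ∈ VQd, isIntegral v)
    -- `ε` is the minimum `ε_Q` for the constant weight `a ≡ 1`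
    (ε : ℝ) (hε : IsLeast (epsSet VQ VQd fun _ => 1) ε)
    -- Condition (1')
    (hcond : ∀ u ∈ VQ, ∀ v ∈ VQd, 1 + v ⬝ᵥ u = 0 ∨ 1 + v ⬝ᵥ u = ε)
    -- `ι` is the pseudo-index `ι_Q`
    (ι : ℝ) (hι : IsLeast (iotaSet VQ VQd) ι)
    -- some facet of `Q` has vertex set which is not a `ℤ`-basis of `ℤ^n`: its `ℤ`-span is
    -- not the standard lattice (the `ℤ`-span of the standard basis of `ℝ^n`)
    (hbad : ∃ v ∈ VQd,
      Submodule.span ℤ ((VQ.filter fun u => v ⬝ᵥ u = -1 : Finset (Fin n → ℝ)) :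
          Set (Fin n → ℝ)) ≠
        Submodule.span ℤ (Set.range fun i => (Pi.single i 1 : Fin n → ℝ))) :
    ι < ε := by
  classical
  by_contra hltc
  push_neg at hltc
  -- `hltc : ε ≤ ι`
  have hVQne : VQ.Nonempty := by
    rcases Finset.eq_empty_or_nonempty VQ with h | h
    · rw [h] at h0; simp [convexHull_empty] at h0
    · exact h
  set Q : Set (Fin n → ℝ) := convexHull ℝ (VQ : Set (Fin n → ℝ)) with hQdef
  set Qd : Set (Fin n → ℝ) := polarDual Q with hQddef
  have hext : ∀ w : Fin n → ℝ, w ∈ VQd ↔ w ∈ Set.extremePoints ℝ Qd := by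
    intro w
    rw [← Finset.mem_coe, hVQd]
  have hQdmem : ∀ w ∈ VQd, ∀ u ∈ VQ, -1 ≤ w ⬝ᵥ u := by
    intro w hw u hu
    have : w ∈ Qd := (mem_extremePoints.1 ((hext w).1 hw)).1
    exact mem_polarDual_hull.1 this u hu
  have hεpos : 0 < ε := by
    obtain ⟨u, hu, w, hw, hne, hx⟩ := hε.1
    have h1 := hQdmem w hw u hu
    have h2 : -1 < w ⬝ᵥ u := lt_of_le_of_ne h1 (Ne.symm hne)
    rw [hx]; simp; linarith
  obtain ⟨v, hv, hspanne⟩ := hbad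
  set F : Finset (Fin n → ℝ) := VQ.filter (fun u => v ⬝ᵥ u = -1) with hFdef
  have hFcard : F.card = n := hsimp v hv
  have hFsub : F ⊆ VQ := Finset.filter_subset _ _
  have hFdot : ∀ u ∈ F, v ⬝ᵥ u = -1 := fun u hu => (Finset.mem_filter.1 hu).2
  -- enumerate the vertices of the facet `F_v`
  have e : {x // x ∈ F} ≃ Fin n := F.equivFin.trans (finCongr hFcard)
  set u_ : Fin n → (Fin n → ℝ) := fun j => ((e.symm j : {x // x ∈ F}) : Fin n → ℝ) with hu_def
  have hu_mem : ∀ j, u_ j ∈ F := fun j => (e.symm j).2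
  have hu_surj : ∀ w, w ∈ F → ∃ j, u_ j = w := by
    intro w hw
    exact ⟨e ⟨w, hw⟩, by simp [hu_def]⟩
  set M : Matrix (Fin n) (Fin n) ℝ := Matrix.of (fun j k => u_ j k) with hMdef
  have hMmulVec : ∀ (x : Fin n → ℝ) (j : Fin n), (M *ᵥ x) j = u_ j ⬝ᵥ x := fun x j => rfl
  -- the vertices of the facet are linearly independent (via extremality of `v`)
  have hdet : M.det ≠ 0 := by
    intro hdet0
    obtain ⟨ξ, hξ0, hξ⟩ := (Matrix.exists_mulVec_eq_zero_iff (M := M)).2 hdet0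
    have hperp : ∀ u ∈ VQ, v ⬝ᵥ u = -1 → ξ ⬝ᵥ u = 0 := by
      intro u hu hvu
      obtain ⟨j, rfl⟩ := hu_surj u (Finset.mem_filter.2 ⟨hu, hvu⟩)
      have h1 := congrFun hξ j
      rw [hMmulVec] at h1
      rw [dotProduct_comm]
      exact h1
    obtain ⟨t, ht, hmove⟩ := exists_move hVQne (fun u hu => hQdmem v hv u hu)
        (fun u hu hvu => le_of_eq (hperp u hu hvu).symm)
    obtain ⟨s, hs, hmove'⟩ := exists_move (ξ := -ξ) hVQne (fun u hu => hQdmem v hv u hu)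
        (fun u hu hvu => by rw [neg_dotProduct, hperp u hu hvu]; norm_num)
    set t' : ℝ := min t s with ht'def
    have ht'pos : 0 < t' := lt_min ht hs
    have h1 : v + t' • ξ ∈ Qd := mem_polarDual_hull.2 (hmove t' ht'pos (min_le_left _ _))
    have h2 : v + t' • (-ξ) ∈ Qd := mem_polarDual_hull.2 (hmove' t' ht'pos (min_le_right _ _))
    have hvext := mem_extremePoints.1 ((hext v).1 hv)
    have hseg : v ∈ openSegment ℝ (v + t' • ξ) (v + t' • (-ξ)) := by
      refine ⟨1/2, 1/2, by norm_num, by norm_num, by norm_num, ?_⟩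
      funext k
      simp only [Pi.add_apply, Pi.smul_apply, Pi.neg_apply, smul_eq_mul]
      ring
    have h3 := (hvext.2 _ h1 _ h2 hseg).1
    have h4 : t' • ξ = 0 := by
      have := congrArg (fun y => y - v) h3
      simpa [add_sub_cancel_left] using this
    rcases smul_eq_zero.1 h4 with h | h
    · exact absurd h (ne_of_gt ht'pos)
    · exact hξ0 h
  -- integer coordinates of the facet vertices
  have hzex : ∀ j : Fin n, ∃ zz : Fin n → ℤ, ∀ k, u_ j k = (zz k : ℝ) := by
    intro j
    have h := hrefl (u_ j) (hFsub (hu_mem j))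
    exact ⟨fun k => (h k).choose, fun k => (h k).choose_spec⟩
  choose z hzz using hzex
  -- main step: the dual basis of the facet basis is integral
  have key : ∀ i : Fin n, ∃ (ξ : Fin n → ℝ) (c : Fin n → ℤ),
      (∀ k, ξ k = (c k : ℝ)) ∧ (∀ j, j ≠ i → ξ ⬝ᵥ u_ j = 0) ∧ ξ ⬝ᵥ u_ i = 1 := by
    intro i
    obtain ⟨ξ, ⟨c, hcξ, hgcd⟩, hperp, hpos⟩ :=
      exists_primitive_perp u_ (fun j => z j) (fun j k => hzz j k) hdet i
    suffices hone : ξ ⬝ᵥ u_ i = 1 by exact ⟨ξ, c, hcξ, hperp, hone⟩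
    have hξne : ξ ≠ 0 := by
      intro h
      rw [h, zero_dotProduct] at hpos
      linarith
    have hξξ : 0 < ξ ⬝ᵥ ξ := by
      have h1 : 0 ≤ ξ ⬝ᵥ ξ := Finset.sum_nonneg fun k _ => mul_self_nonneg _
      refine lt_of_le_of_ne h1 ?_
      intro h
      exact hξne (dotProduct_self_eq_zero.1 h.symm)
    have hξx : ∀ u ∈ VQ, v ⬝ᵥ u = -1 → 0 ≤ ξ ⬝ᵥ u := by
      intro u hu hvu
      obtain ⟨j, rfl⟩ := hu_surj u (Finset.mem_filter.2 ⟨hu, hvu⟩)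
      by_cases hj : j = i
      · subst hj; linarith [hpos]
      · rw [hperp j hj]
    obtain ⟨tm, htm, hmove⟩ := exists_move hVQne (fun u hu => hQdmem v hv u hu) hξx
    set T : Set ℝ := {t : ℝ | v + t • ξ ∈ Qd} with hTdef
    have h0T : (0:ℝ) ∈ T := by
      have : v ∈ Qd := (mem_extremePoints.1 ((hext v).1 hv)).1
      simpa [hTdef] using this
    have htmT : tm ∈ T := mem_polarDual_hull.2 (hmove tm htm le_rfl)
    have hTclosed : IsClosed T := by
      have hcont : Continuous (fun t : ℝ => v + t • ξ) :=
        continuous_const.add (continuous_id.smul continuous_const)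
      exact (polarDual_closed Q).preimage hcont
    obtain ⟨r, hr, hball⟩ : ∃ r > 0, Metric.ball (0 : Fin n → ℝ) r ⊆ Q := by
      rw [mem_interior_iff_mem_nhds] at h0
      exact Metric.mem_nhds_iff.1 h0
    have hbdd : BddAbove T := by
      set δ : ℝ := r / (2 * (‖ξ‖ + 1)) with hδdef
      have hnormpos : 0 < ‖ξ‖ + 1 := by positivity
      have hδpos : 0 < δ := by positivity
      refine ⟨(1/δ - v ⬝ᵥ ξ) / (ξ ⬝ᵥ ξ), ?_⟩
      intro t htT
      have hu0 : δ • (-ξ) ∈ Metric.ball (0 : Fin n → ℝ) r := by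
        rw [Metric.mem_ball, dist_zero_right, norm_smul, norm_neg, Real.norm_eq_abs,
          abs_of_pos hδpos]
        rw [hδdef]
        rw [div_mul_eq_mul_div, div_lt_iff₀ (by positivity)]
        nlinarith [norm_nonneg ξ]
      have hu0Q : δ • (-ξ) ∈ Q := hball hu0
      have hineq : -1 ≤ (v + t • ξ) ⬝ᵥ (δ • (-ξ)) := htT _ hu0Q
      have hcalc : (v + t • ξ) ⬝ᵥ (δ • (-ξ)) = -δ * (v ⬝ᵥ ξ + t * (ξ ⬝ᵥ ξ)) := by
        rw [dotProduct_smul, add_dotProduct, smul_dotProduct, dotProduct_neg]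
        simp [smul_eq_mul]
        ring
      rw [hcalc] at hineq
      rw [le_div_iff₀ hξξ]
      have h5 : δ * (v ⬝ᵥ ξ + t * (ξ ⬝ᵥ ξ)) ≤ 1 := by nlinarith
      have h6 : v ⬝ᵥ ξ + t * (ξ ⬝ᵥ ξ) ≤ 1/δ := by
        rw [le_div_iff₀ hδpos]
        nlinarith
      linarith
    set t₁ : ℝ := sSup T with ht₁def
    have ht₁T : t₁ ∈ T := hTclosed.csSup_mem ⟨0, h0T⟩ hbdd
    have ht₁pos : 0 < t₁ := lt_of_lt_of_le htm (le_csSup hbdd htmT)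
    set v' : Fin n → ℝ := v + t₁ • ξ with hv'def
    have hv'Qd : v' ∈ Qd := ht₁T
    have hdotv' : ∀ j, v' ⬝ᵥ u_ j = -1 + t₁ * (ξ ⬝ᵥ u_ j) := by
      intro j
      rw [hv'def, add_dotProduct, smul_dotProduct, hFdot _ (hu_mem j)]
      rfl
    have hξi_ne : ξ ⬝ᵥ u_ i ≠ 0 := ne_of_gt hpos
    -- every point of `Qd` lying on the affine line through the ridge is on the segment
    have hline : ∀ x : Fin n → ℝ, (∀ j, j ≠ i → x ⬝ᵥ u_ j = -1) →
        x = v + (((x - v) ⬝ᵥ u_ i) / (ξ ⬝ᵥ u_ i)) • ξ := by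
      intro x hx
      set s : ℝ := ((x - v) ⬝ᵥ u_ i) / (ξ ⬝ᵥ u_ i) with hs
      have hw : M *ᵥ (x - v - s • ξ) = 0 := by
        funext j
        rw [hMmulVec, dotProduct_comm, sub_dotProduct, sub_dotProduct, smul_dotProduct]
        simp only [Pi.zero_apply]
        by_cases hj : j = i
        · subst hj
          rw [hs, smul_eq_mul, div_mul_cancel₀ _ hξi_ne, sub_dotProduct]
          ring
        · rw [hx j hj, hFdot _ (hu_mem j), hperp j hj]
          simp
      by_cases hw0 : x - v - s • ξ = 0
      · rw [sub_sub] at hw0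
        exact sub_eq_zero.1 hw0
      · exact absurd (Matrix.exists_mulVec_eq_zero_iff.1 ⟨_, hw0, hw⟩) hdet
    -- `v'` is an extreme point of `Q*`, hence a vertex
    have hv'ext : v' ∈ Set.extremePoints ℝ Qd := by
      rw [mem_extremePoints]
      refine ⟨hv'Qd, ?_⟩
      intro x1 hx1 x2 hx2 hseg
      obtain ⟨a, b, ha, hb, hab, habv⟩ := hseg
      have hdotj : ∀ j, j ≠ i → x1 ⬝ᵥ u_ j = -1 ∧ x2 ⬝ᵥ u_ j = -1 := by
        intro j hj
        have h1 : -1 ≤ x1 ⬝ᵥ u_ j := mem_polarDual_hull.1 hx1 _ (hFsub (hu_mem j))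
        have h2 : -1 ≤ x2 ⬝ᵥ u_ j := mem_polarDual_hull.1 hx2 _ (hFsub (hu_mem j))
        have h3 : a * (x1 ⬝ᵥ u_ j) + b * (x2 ⬝ᵥ u_ j) = -1 := by
          have h4 := congrArg (fun y => y ⬝ᵥ u_ j) habv
          simp only [add_dotProduct, smul_dotProduct, smul_eq_mul] at h4
          rw [hdotv' j, hperp j hj] at h4
          linarith [h4]
        constructor <;> nlinarith
      have hxs1 := hline x1 (fun j hj => (hdotj j hj).1)
      have hxs2 := hline x2 (fun j hj => (hdotj j hj).2)
      set s1 : ℝ := ((x1 - v) ⬝ᵥ u_ i) / (ξ ⬝ᵥ u_ i) with hs1def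
      set s2 : ℝ := ((x2 - v) ⬝ᵥ u_ i) / (ξ ⬝ᵥ u_ i) with hs2def
      have hs1T : s1 ∈ T := by rw [hTdef]; show v + s1 • ξ ∈ Qd; rw [← hxs1]; exact hx1
      have hs2T : s2 ∈ T := by rw [hTdef]; show v + s2 • ξ ∈ Qd; rw [← hxs2]; exact hx2
      have hs1le : s1 ≤ t₁ := le_csSup hbdd hs1T
      have hs2le : s2 ≤ t₁ := le_csSup hbdd hs2T
      have hsum : a * s1 + b * s2 = t₁ := by
        have h4 := congrArg (fun y => y ⬝ᵥ ξ) habv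
        rw [hxs1, hxs2, hv'def] at h4
        simp only [add_dotProduct, smul_dotProduct, smul_eq_mul] at h4
        have h5 : (a * s1 + b * s2) * (ξ ⬝ᵥ ξ) = t₁ * (ξ ⬝ᵥ ξ) := by
          linear_combination h4 - (v ⬝ᵥ ξ) * hab
        exact mul_right_cancel₀ (ne_of_gt hξξ) h5
      have hseq1 : s1 = t₁ := le_antisymm hs1le (by nlinarith)
      have hseq2 : s2 = t₁ := le_antisymm hs2le (by nlinarith)
      constructor
      · rw [hxs1, hseq1]
      · rw [hxs2, hseq2]
    have hv'VQd : v' ∈ VQd := (hext v').2 hv'ext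
    have hv'ui : v' ⬝ᵥ u_ i = -1 + t₁ * (ξ ⬝ᵥ u_ i) := hdotv' i
    have hv'uine : v' ⬝ᵥ u_ i ≠ -1 := by
      rw [hv'ui]
      nlinarith
    have hv'nev : v' ≠ v := by
      intro h
      apply hv'uine
      rw [h]
      exact hFdot _ (hu_mem i)
    have huiVQ : u_ i ∈ VQ := hFsub (hu_mem i)
    -- the wall datum lies in `iotaSet`
    have hmemiota : (1 + v' ⬝ᵥ u_ i) / (ξ ⬝ᵥ u_ i) ∈ iotaSet VQ VQd := by
      refine ⟨v', hv'VQd, v, hv, hv'nev, u_ i, huiVQ, hFdot _ (hu_mem i), hv'uine, ?_,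
        ξ, ⟨c, hcξ, hgcd⟩, ?_, hpos, rfl⟩
      · intro w hw hvw hwne
        obtain ⟨j, rfl⟩ := hu_surj w (Finset.mem_filter.2 ⟨hw, hvw⟩)
        have hj : j ≠ i := fun h => hwne (by rw [h])
        rw [hdotv' j, hperp j hj]
        ring
      · intro w hw hvw hwne
        obtain ⟨j, rfl⟩ := hu_surj w (Finset.mem_filter.2 ⟨hw, hvw⟩)
        exact hperp j (fun h => hwne (by rw [h]))
    have hιle : ι ≤ (1 + v' ⬝ᵥ u_ i) / (ξ ⬝ᵥ u_ i) := hι.2 hmemiota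
    have heps : 1 + v' ⬝ᵥ u_ i = ε := by
      rcases hcond (u_ i) huiVQ v' hv'VQd with h | h
      · exact absurd (by linarith : v' ⬝ᵥ u_ i = -1) hv'uine
      · exact h
    have hd_le1 : ξ ⬝ᵥ u_ i ≤ 1 := by
      rw [heps] at hιle
      have h8 : ε ≤ ε / (ξ ⬝ᵥ u_ i) := le_trans hltc hιle
      rw [le_div_iff₀ hpos] at h8
      nlinarith
    have hint : ∃ m : ℤ, ξ ⬝ᵥ u_ i = (m : ℝ) := by
      refine ⟨∑ k, c k * z i k, ?_⟩
      push_cast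
      simp only [dotProduct]
      congr 1
      funext k
      rw [hcξ k, hzz i k]
    obtain ⟨m, hm⟩ := hint
    have hm1 : m = 1 := by
      have h1 : (0:ℝ) < (m:ℝ) := hm ▸ hpos
      have h2 : (m:ℝ) ≤ 1 := hm ▸ hd_le1
      have h1' : 0 < m := by exact_mod_cast h1
      have h2' : m ≤ 1 := by exact_mod_cast h2
      omega
    rw [hm, hm1]
    norm_num
  -- final lattice argument: the facet basis is dual to an integral basis, so it
  -- generates the standard lattice, contradicting `hspanne`
  choose ξ cInt hcoord hperpAll honeAll using key
  have hsub1 : Submodule.span ℤ (Set.range fun i => (Pi.single i 1 : Fin n → ℝ)) ≤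
      Submodule.span ℤ (F : Set (Fin n → ℝ)) := by
    rw [Submodule.span_le]
    rintro x ⟨k, rfl⟩
    show (Pi.single k 1 : Fin n → ℝ) ∈ (Submodule.span ℤ (F : Set (Fin n → ℝ)) : Set (Fin n → ℝ))
    rw [SetLike.mem_coe]
    have hdetT : (Mᵀ).det ≠ 0 := by rw [Matrix.det_transpose]; exact hdet
    set cc : Fin n → ℝ := (Mᵀ)⁻¹ *ᵥ (Pi.single k 1) with hccdef
    have hrep : Mᵀ *ᵥ cc = Pi.single k 1 := by
      rw [hccdef, Matrix.mulVec_mulVec, Matrix.mul_nonsing_inv _ (isUnit_iff_ne_zero.2 hdetT),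
        Matrix.one_mulVec]
    have hsum : (Pi.single k 1 : Fin n → ℝ) = ∑ j, cc j • u_ j := by
      funext l
      have h1 := congrFun hrep l
      rw [← h1]
      simp only [Matrix.mulVec, dotProduct, Matrix.transpose_apply, Finset.sum_apply,
        Pi.smul_apply, smul_eq_mul, hMdef, Matrix.of_apply]
      exact Finset.sum_congr rfl fun j _ => mul_comm _ _
    have hccint : ∀ j, cc j = ((cInt j k : ℤ) : ℝ) := by
      intro j
      have h1 : ξ j ⬝ᵥ (Pi.single k 1 : Fin n → ℝ) = cc j := by
        rw [hsum]
        have h2 : ξ j ⬝ᵥ (∑ j', cc j' • u_ j') = ∑ j', cc j' * (ξ j ⬝ᵥ u_ j') := by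
          simp only [dotProduct, Finset.sum_apply, Pi.smul_apply, smul_eq_mul, Finset.mul_sum]
          rw [Finset.sum_comm]
          exact Finset.sum_congr rfl fun j' _ => Finset.sum_congr rfl fun l _ => by ring
        rw [h2, Finset.sum_eq_single j]
        · rw [honeAll j]; ring
        · intro j' _ hj'
          rw [hperpAll j j' hj']; ring
        · intro h
          exact absurd (Finset.mem_univ j) h
      rw [← h1, dotProduct_single, hcoord j k]
      ring
    rw [hsum]
    apply Submodule.sum_mem
    intro j _
    rw [hccint j, Int.cast_smul_eq_zsmul ℝ (cInt j k) (u_ j)]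
    exact Submodule.smul_mem _ _ (Submodule.subset_span (hu_mem j))
  have hsub2 : Submodule.span ℤ (F : Set (Fin n → ℝ)) ≤
      Submodule.span ℤ (Set.range fun i => (Pi.single i 1 : Fin n → ℝ)) := by
    rw [Submodule.span_le]
    intro x hx
    have hxVQ : x ∈ VQ := hFsub hx
    have hxi := hrefl x hxVQ
    choose zz hzzx using hxi
    have hxsum : x = ∑ k, (zz k : ℤ) • (Pi.single k 1 : Fin n → ℝ) := by
      funext l
      rw [Finset.sum_apply]
      rw [Finset.sum_eq_single l]
      · rw [Pi.smul_apply, Pi.single_eq_same, hzzx l]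
        simp
      · intro k _ hk
        rw [Pi.smul_apply, Pi.single_eq_of_ne (Ne.symm hk), smul_zero]
      · intro h
        exact absurd (Finset.mem_univ l) h
    rw [hxsum]
    exact Submodule.sum_mem _ fun k _ =>
      Submodule.smul_mem _ _ (Submodule.subset_span ⟨k, rfl⟩)
  exact hspanne (le_antisymm hsub2 hsub1)
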